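/- Every integral representation of the cyclic group of order 2 is a signed permutation representation. Precisely: let M be a finitely generated free ℤ-module and let σ : M → M be a ℤ-linear automorphism with σ ∘ σ = id. Then there exists a ℤ-basis (b_1, ..., b_n) of M, a permutation π of {1, ..., n}, and signs ε_1, ..., ε_n ∈ {+1, −1} such that σ(b_i) = ε_i · b_{π(i)} for all i. -/

import Mathlib

open Submodule LinearMap

lemma split_basis {R A B : Type*} [CommRing R] [AddCommGroup A] [AddCommGroup B]
    [Module R A] [Module R B]
    {ιK ιB : Type*} (p : A →ₗ[R] B) (s : B →ₗ[R] A) (h : ∀ b, p (s b) = b)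
    (bK : Module.Basis ιK R (LinearMap.ker p)) (bB : Module.Basis ιB R B) :
    ∃ bA : Module.Basis (ιK ⊕ ιB) R A,
      (∀ j, bA (Sum.inl j) = (bK j : A)) ∧ (∀ i, bA (Sum.inr i) = s (bB i)) := by
  have hker : ∀ x : A, (LinearMap.id - s.comp p : A →ₗ[R] A) x ∈ LinearMap.ker p := by
    intro x
    simp [h]
  let F : A →ₗ[R] (LinearMap.ker p) × B :=
    LinearMap.prod ((LinearMap.id - s.comp p : A →ₗ[R] A).codRestrict (LinearMap.ker p) hker) p
  let G : (LinearMap.ker p) × B →ₗ[R] A :=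
    (LinearMap.ker p).subtype.comp (LinearMap.fst R _ _) + s.comp (LinearMap.snd R _ _)
  have hGF : G.comp F = LinearMap.id := by
    apply LinearMap.ext
    intro x
    simp [F, G]
  have hFG : F.comp G = LinearMap.id := by
    apply LinearMap.ext
    rintro ⟨⟨y, hy⟩, b⟩
    have hy' : p y = 0 := LinearMap.mem_ker.mp hy
    refine Prod.ext (Subtype.ext ?_) ?_
    · simp [F, G, hy', h]
    · simp [F, G, hy', h]
  let e : A ≃ₗ[R] (LinearMap.ker p) × B := LinearEquiv.ofLinear F G hFG hGF
  refine ⟨(bK.prod bB).map e.symm, fun j => ?_, fun i => ?_⟩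
  · simp [e, Module.Basis.prod_apply, G]
  · simp [e, Module.Basis.prod_apply, G]

/-- Smith normal form of a linear map between finite free modules over a PID,
with the diagonal entries reduced modulo `2` (using a "division by 2" oracle `htwo`,
which holds over `ℤ`). -/
lemma key_lemma {R Q' F : Type*} [CommRing R] [IsDomain R] [IsPrincipalIdealRing R]
    [AddCommGroup Q'] [Module R Q'] [Module.Free R Q'] [Module.Finite R Q']
    [AddCommGroup F] [Module R F] [Module.Free R F] [Module.Finite R F]
    (htwo : ∀ x : R, ∃ h r0, (r0 = 0 ∨ r0 = 1) ∧ x = 2 * h + r0)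
    (c : Q' →ₗ[R] F) :
    ∃ (k n m : ℕ) (qB : Module.Basis (Fin k ⊕ Fin n) R Q') (fB : Module.Basis (Fin m) R F)
      (em : Fin n ↪ Fin m) (r : Fin n → R) (d : Q' →ₗ[R] F),
      (∀ i, r i = 0 ∨ r i = 1) ∧
      (∀ j, c (qB (Sum.inl j)) - (2 : R) • d (qB (Sum.inl j)) = 0) ∧
      (∀ i, c (qB (Sum.inr i)) - (2 : R) • d (qB (Sum.inr i)) = r i • fB (em i)) := by
  classical
  let bF0 := Module.Free.chooseBasis R F
  obtain ⟨n, ⟨bM, bN, emb, a, hsnf⟩⟩ := (LinearMap.range c).smithNormalForm bF0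
  let κ := Module.Free.ChooseBasisIndex R F
  let m := Fintype.card κ
  let eκ : κ ≃ Fin m := Fintype.equivFin κ
  let fB : Module.Basis (Fin m) R F := bM.reindex eκ
  let em : Fin n ↪ Fin m := emb.trans eκ.toEmbedding
  have hsnf' : ∀ i, (bN i : F) = a i • fB (em i) := by
    intro i
    rw [hsnf i]
    congr 1
    simp [fB, em]
  have hpre : ∀ i : Fin n, ∃ x, c x = (bN i : F) := fun i => (bN i).2
  let t : (LinearMap.range c) →ₗ[R] Q' := bN.constr R (fun i => (hpre i).choose)
  let p : Q' →ₗ[R] LinearMap.range c := c.rangeRestrict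
  have hpt : ∀ y, p (t y) = y := by
    have h : p.comp t = LinearMap.id := by
      apply bN.ext
      intro i
      apply Subtype.ext
      simp [p, t, Module.Basis.constr_basis, (hpre i).choose_spec]
    intro y
    exact DFunLike.congr_fun h y
  obtain ⟨k, bK⟩ := (LinearMap.ker p).basisOfPid (Module.Free.chooseBasis R Q')
  obtain ⟨qB, hqK, hqN⟩ := split_basis p t hpt bK bN
  have hcl : ∀ j, c (qB (Sum.inl j)) = 0 := by
    intro j
    have hk : (bK j : Q') ∈ LinearMap.ker c := by
      rw [← LinearMap.ker_rangeRestrict]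
      exact (bK j).2
    rw [hqK j]
    exact hk
  have hcr : ∀ i, c (qB (Sum.inr i)) = a i • fB (em i) := by
    intro i
    rw [hqN i, ← hsnf' i]
    have h2 : (p (t (bN i)) : F) = (bN i : F) := by rw [hpt (bN i)]
    simpa [p] using h2
  have hhr : ∀ i : Fin n, ∃ h r0, (r0 = 0 ∨ r0 = 1) ∧ a i = 2 * h + r0 := fun i => htwo (a i)
  choose half r hr01 ha using hhr
  let d : Q' →ₗ[R] F := qB.constr R (Sum.elim (fun _ => 0)
    (fun i => half i • fB (em i)))
  have hd : ∀ x, d (qB x) = Sum.elim (fun _ => (0 : F))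
      (fun i => half i • fB (em i)) x := fun x => qB.constr_basis R _ x
  refine ⟨k, n, m, qB, fB, em, r, d, hr01, fun j => ?_, fun i => ?_⟩
  · rw [hcl j, hd]
    simp
  · rw [hcr i, hd]
    simp only [Sum.elim_inr]
    rw [smul_smul, ← sub_smul]
    congr 1
    rw [ha i]
    ring

theorem aux_thm {R M : Type*} [CommRing R] [IsDomain R] [IsPrincipalIdealRing R]
    [AddCommGroup M] [Module R M] [Module.Free R M] [Module.Finite R M]
    [NoZeroSMulDivisors R M]
    (htwo : ∀ x : R, ∃ h r0, (r0 = 0 ∨ r0 = 1) ∧ x = 2 * h + r0)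
    (σ : M ≃ₗ[R] M) (hσ : ∀ x : M, σ (σ x) = x) :
    ∃ (n : ℕ) (b : Module.Basis (Fin n) R M) (π : Equiv.Perm (Fin n)) (ε : Fin n → R),
      (∀ i, ε i = 1 ∨ ε i = -1) ∧ ∀ i, σ (b i) = ε i • b (π i) := by
  classical
  let τ := σ.toLinearMap
  let Mneg : Submodule R M := LinearMap.ker (τ + LinearMap.id)
  have hmem : ∀ x : M, x ∈ Mneg ↔ σ x = -x := by
    intro x
    simp [Mneg, LinearMap.mem_ker, τ, eq_neg_iff_add_eq_zero]
  have hdiff : ∀ x : M, σ x - x ∈ Mneg := by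
    intro x
    rw [hmem, map_sub, hσ]
    abel
  -- the quotient is torsion-free, hence free
  haveI hQnz : NoZeroSMulDivisors R (M ⧸ Mneg) := by
    constructor
    intro a x hax
    by_cases ha : a = 0
    · exact Or.inl ha
    right
    obtain ⟨y, rfl⟩ := Submodule.Quotient.mk_surjective Mneg x
    rw [← Submodule.Quotient.mk_smul, Submodule.Quotient.mk_eq_zero] at hax
    rw [Submodule.Quotient.mk_eq_zero]
    rw [hmem] at hax ⊢
    rw [map_smul] at hax
    have h0 : a • (σ y + y) = 0 := by
      rw [smul_add, hax]
      abel
    rcases smul_eq_zero.mp h0 with h | h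
    · exact absurd h ha
    · linear_combination (norm := abel) h
  haveI : IsNoetherian R M := isNoetherian_of_isNoetherianRing_of_finite R M
  haveI : Module.Finite R Mneg := Module.Finite.iff_fg.mpr (IsNoetherian.noetherian Mneg)
  haveI : Module.Free R Mneg := Module.free_of_finite_type_torsion_free'
  haveI : Module.Free R (M ⧸ Mneg) := Module.free_of_finite_type_torsion_free'
  -- a section of the quotient map
  let bQ := Module.Free.chooseBasis R (M ⧸ Mneg)
  let s : (M ⧸ Mneg) →ₗ[R] M :=
    bQ.constr R (fun i => (Submodule.Quotient.mk_surjective Mneg (bQ i)).choose)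
  have hs : ∀ q, Mneg.mkQ (s q) = q := by
    have h : Mneg.mkQ.comp s = LinearMap.id := by
      apply bQ.ext
      intro i
      simp [s, Module.Basis.constr_basis, Submodule.mkQ_apply,
        (Submodule.Quotient.mk_surjective Mneg (bQ i)).choose_spec]
    intro q
    exact DFunLike.congr_fun h q
  -- the defect of equivariance of the section
  let c : (M ⧸ Mneg) →ₗ[R] Mneg :=
    LinearMap.codRestrict Mneg (τ.comp s - s) (fun q => hdiff (s q))
  obtain ⟨k, n, m, qB, fB, em, r, d, hr01, h0, h1⟩ := key_lemma htwo c
  -- improved section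
  let s' : (M ⧸ Mneg) →ₗ[R] M := s + Mneg.subtype.comp d
  have hs' : ∀ q, Mneg.mkQ (s' q) = q := by
    intro q
    have h2 : Mneg.mkQ (s' q) = Mneg.mkQ (s q) + Mneg.mkQ ((d q : M)) := by
      simp [s']
    have h3 : Mneg.mkQ ((d q : M)) = 0 := by
      rw [Submodule.mkQ_apply, Submodule.Quotient.mk_eq_zero]
      exact (d q).2
    rw [h2, h3, hs q, add_zero]
  have hcast : ∀ v, ((c v - (2 : R) • d v : Mneg) : M) = (c v : M) - (2 : R) • (d v : M) := by
    intro v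
    simp
  have hσs' : ∀ q, σ (s' q) = s' q + ((c q - (2 : R) • d q : Mneg) : M) := by
    intro q
    rw [hcast]
    have hc : (c q : M) = σ (s q) - s q := rfl
    have hd : σ ((d q : M)) = -(d q : M) := (hmem _).mp (d q).2
    have h4 : σ (s' q) = σ (s q) + σ ((d q : M)) := by simp [s']
    have h5 : s' q = s q + (d q : M) := by simp [s']
    rw [h4, hd, h5, hc, two_smul]
    abel
  -- the generators and the values of σ on them
  let e : (Fin k ⊕ Fin n) → M := fun x => s' (qB x)
  let f : Fin m → M := fun j => (fB j : M)
  have hfσ : ∀ j, σ (f j) = -(f j) := fun j => (hmem _).mp (fB j).2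
  have he0 : ∀ j, σ (e (Sum.inl j)) = e (Sum.inl j) := by
    intro j
    show σ (s' (qB (Sum.inl j))) = s' (qB (Sum.inl j))
    rw [hσs', h0 j]
    simp
  have he1 : ∀ i, σ (e (Sum.inr i)) = e (Sum.inr i) + r i • f (em i) := by
    intro i
    show σ (s' (qB (Sum.inr i))) = s' (qB (Sum.inr i)) + r i • f (em i)
    rw [hσs', h1 i]
    simp [f]
  -- assemble a basis of M
  let fB' : Module.Basis (Fin m) R (LinearMap.ker Mneg.mkQ) :=
    fB.map (LinearEquiv.ofEq Mneg (LinearMap.ker Mneg.mkQ) (Submodule.ker_mkQ Mneg).symm)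
  obtain ⟨B, hBl, hBr⟩ := split_basis Mneg.mkQ s' hs' fB' qB
  have hBl' : ∀ j, B (Sum.inl j) = f j := by
    intro j
    rw [hBl j]
    rfl
  have hBr' : ∀ x, B (Sum.inr x) = e x := fun x => hBr x
  -- the pairing data
  let P : Fin m → Prop := fun j => ∃ i, r i = 1 ∧ em i = j
  let D : Fin m → M := fun j => if h : P j then e (Sum.inr h.choose) else 0
  -- the twisted family
  let vf : (Fin m ⊕ (Fin k ⊕ Fin n)) → M := Sum.elim (fun j => f j + D j) e
  let wf : (Fin m ⊕ (Fin k ⊕ Fin n)) → M := Sum.elim (fun j => f j - D j) e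
  let V : M →ₗ[R] M := B.constr R vf
  let W : M →ₗ[R] M := B.constr R wf
  have hV : ∀ x, V (B x) = vf x := fun x => B.constr_basis R _ x
  have hW : ∀ x, W (B x) = wf x := fun x => B.constr_basis R _ x
  have hVe : ∀ x, V (e x) = e x := by
    intro x
    rw [← hBr' x, hV]
    exact (hBr' x).symm
  have hWe : ∀ x, W (e x) = e x := by
    intro x
    rw [← hBr' x, hW]
    exact (hBr' x).symm
  have hVD : ∀ j, V (D j) = D j := by
    intro j
    by_cases h : P j
    · show V (if h' : P j then e (Sum.inr h'.choose) else 0)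
        = (if h' : P j then e (Sum.inr h'.choose) else 0)
      rw [dif_pos h]
      exact hVe _
    · show V (if h' : P j then e (Sum.inr h'.choose) else 0)
        = (if h' : P j then e (Sum.inr h'.choose) else 0)
      rw [dif_neg h, map_zero]
  have hWD : ∀ j, W (D j) = D j := by
    intro j
    by_cases h : P j
    · show W (if h' : P j then e (Sum.inr h'.choose) else 0)
        = (if h' : P j then e (Sum.inr h'.choose) else 0)
      rw [dif_pos h]
      exact hWe _
    · show W (if h' : P j then e (Sum.inr h'.choose) else 0)
        = (if h' : P j then e (Sum.inr h'.choose) else 0)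
      rw [dif_neg h, map_zero]
  have hVf : ∀ j, V (f j) = f j + D j := by
    intro j
    have h1 : V (B (Sum.inl j)) = vf (Sum.inl j) := hV _
    rw [hBl' j] at h1
    rw [h1]
    rfl
  have hWf : ∀ j, W (f j) = f j - D j := by
    intro j
    have h1 : W (B (Sum.inl j)) = wf (Sum.inl j) := hW _
    rw [hBl' j] at h1
    rw [h1]
    rfl
  have hVW : V.comp W = LinearMap.id := by
    apply B.ext
    intro x
    rw [LinearMap.comp_apply, hW, LinearMap.id_apply]
    rcases x with j | x
    · show V (f j - D j) = B (Sum.inl j)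
      rw [map_sub, hVf j, hVD j, hBl' j]
      abel
    · show V (e x) = B (Sum.inr x)
      rw [hVe x, hBr' x]
  have hWV : W.comp V = LinearMap.id := by
    apply B.ext
    intro x
    rw [LinearMap.comp_apply, hV, LinearMap.id_apply]
    rcases x with j | x
    · show W (f j + D j) = B (Sum.inl j)
      rw [map_add, hWf j, hWD j, hBl' j]
      abel
    · show W (e x) = B (Sum.inr x)
      rw [hWe x, hBr' x]
  let Bnew : Module.Basis (Fin m ⊕ (Fin k ⊕ Fin n)) R M := B.map (LinearEquiv.ofLinear V W hVW hWV)
  have hBnew : ∀ x, Bnew x = V (B x) := by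
    intro x
    simp only [Bnew, Module.Basis.map_apply, LinearEquiv.ofLinear_apply]
  have hBnewl : ∀ j, Bnew (Sum.inl j) = f j + D j := by
    intro j
    rw [hBnew, hV]
    rfl
  have hBnewr : ∀ x, Bnew (Sum.inr x) = e x := by
    intro x
    rw [hBnew, hV]
    rfl
  -- the permutation
  let pf : (Fin m ⊕ (Fin k ⊕ Fin n)) → (Fin m ⊕ (Fin k ⊕ Fin n)) :=
    Sum.elim (fun j => if h : P j then Sum.inr (Sum.inr h.choose) else Sum.inl j)
      (Sum.elim (fun j => Sum.inr (Sum.inl j))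
        (fun i => if r i = 1 then Sum.inl (em i) else Sum.inr (Sum.inr i)))
  have hpfl_pos : ∀ (j : Fin m) (h : P j), pf (Sum.inl j) = Sum.inr (Sum.inr h.choose) := by
    intro j h
    show (if h' : P j then Sum.inr (Sum.inr h'.choose) else Sum.inl j) = _
    rw [dif_pos h]
  have hpfl_neg : ∀ (j : Fin m), ¬ P j → pf (Sum.inl j) = Sum.inl j := by
    intro j h
    show (if h' : P j then Sum.inr (Sum.inr h'.choose) else Sum.inl j) = _
    rw [dif_neg h]
  have hpfr0 : ∀ (j : Fin k), pf (Sum.inr (Sum.inl j)) = Sum.inr (Sum.inl j) := fun j => rfl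
  have hpfr1_pos : ∀ (i : Fin n), r i = 1 → pf (Sum.inr (Sum.inr i)) = Sum.inl (em i) := by
    intro i h
    show (if _ : r i = 1 then Sum.inl (em i) else Sum.inr (Sum.inr i)) = _
    rw [dif_pos h]
  have hpfr1_neg : ∀ (i : Fin n), ¬ r i = 1 → pf (Sum.inr (Sum.inr i)) = Sum.inr (Sum.inr i) := by
    intro i h
    show (if _ : r i = 1 then Sum.inl (em i) else Sum.inr (Sum.inr i)) = _
    rw [dif_neg h]
  have hinv : Function.Involutive pf := by
    intro x
    rcases x with j | (j | i)
    · by_cases h : P j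
      · rw [hpfl_pos j h]
        have hspec := h.choose_spec
        rw [hpfr1_pos _ hspec.1, hspec.2]
      · rw [hpfl_neg j h, hpfl_neg j h]
    · rw [hpfr0, hpfr0]
    · by_cases hri : r i = 1
      · rw [hpfr1_pos i hri]
        have hP : P (em i) := ⟨i, hri, rfl⟩
        rw [hpfl_pos _ hP]
        have hspec := hP.choose_spec
        have hc : hP.choose = i := em.injective hspec.2
        rw [hc]
      · rw [hpfr1_neg i hri, hpfr1_neg i hri]
  let π : Equiv.Perm (Fin m ⊕ (Fin k ⊕ Fin n)) := hinv.toPerm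
  have hπ : ∀ x, π x = pf x := fun x => rfl
  -- the signs
  let ε : (Fin m ⊕ (Fin k ⊕ Fin n)) → R := Sum.elim (fun j => if P j then 1 else -1) (fun _ => 1)
  have hεl_pos : ∀ j, P j → ε (Sum.inl j) = 1 := by
    intro j h
    show (if P j then (1 : R) else -1) = 1
    rw [if_pos h]
  have hεl_neg : ∀ j, ¬ P j → ε (Sum.inl j) = -1 := by
    intro j h
    show (if P j then (1 : R) else -1) = -1
    rw [if_neg h]
  have hεr : ∀ x, ε (Sum.inr x) = 1 := fun x => rfl
  have hε : ∀ x, ε x = 1 ∨ ε x = -1 := by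
    intro x
    rcases x with j | x
    · by_cases h : P j
      · exact Or.inl (hεl_pos j h)
      · exact Or.inr (hεl_neg j h)
    · exact Or.inl (hεr x)
  -- the main verification
  have hmain : ∀ x, σ (Bnew x) = ε x • Bnew (π x) := by
    intro x
    rcases x with j | (j | i)
    · by_cases h : P j
      · have hspec := h.choose_spec
        have hDj : D j = e (Sum.inr h.choose) := dif_pos h
        rw [hBnewl j, hDj, map_add, hfσ j, he1 h.choose, hspec.2, hspec.1, one_smul,
          hπ, hpfl_pos j h, hεl_pos j h, one_smul, hBnewr]
        abel
      · have hDj : D j = 0 := dif_neg h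
        rw [hBnewl j, hDj, add_zero, hfσ j, hπ, hpfl_neg j h, hεl_neg j h, hBnewl j, hDj,
          add_zero, neg_one_smul]
    · rw [hBnewr, he0 j, hπ, hpfr0, hεr, one_smul, hBnewr]
    · rcases hr01 i with hri | hri
      · have hri' : ¬ r i = 1 := by
          rw [hri]
          intro hcon
          exact one_ne_zero hcon.symm
        rw [hBnewr, he1 i, hri, zero_smul, add_zero, hπ, hpfr1_neg i hri', hεr, one_smul, hBnewr]
      · have hP : P (em i) := ⟨i, hri, rfl⟩
        have hspec := hP.choose_spec
        have hc : hP.choose = i := em.injective hspec.2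
        have hDem : D (em i) = e (Sum.inr i) := by
          have : D (em i) = e (Sum.inr hP.choose) := dif_pos hP
          rw [this, hc]
        rw [hBnewr, he1 i, hri, one_smul, hπ, hpfr1_pos i hri, hεr, one_smul, hBnewl, hDem]
        abel
  -- transport to Fin
  let N := Fintype.card (Fin m ⊕ (Fin k ⊕ Fin n))
  let eI : (Fin m ⊕ (Fin k ⊕ Fin n)) ≃ Fin N := Fintype.equivFin _
  refine ⟨N, Bnew.reindex eI, eI.permCongr π, ε ∘ eI.symm, fun i => hε _, fun i => ?_⟩
  rw [Module.Basis.reindex_apply, hmain (eI.symm i)]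
  simp [Equiv.permCongr_apply]

/-- Every integral representation of the cyclic group of order 2 is a signed
permutation representation: if `σ` is a `ℤ`-linear involution of a finitely generated
free `ℤ`-module `M`, then `M` has a `ℤ`-basis each of whose elements is sent by `σ`
to plus or minus a basis element. -/
theorem integral_rep_of_C2_is_signed_permutation
    (M : Type*) [AddCommGroup M] [Module ℤ M] [Module.Free ℤ M] [Module.Finite ℤ M]
    (σ : M ≃ₗ[ℤ] M) (hσ : ∀ x : M, σ (σ x) = x) :
    ∃ (n : ℕ) (b : Module.Basis (Fin n) ℤ M) (π : Equiv.Perm (Fin n)) (ε : Fin n → ℤ),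
      (∀ i, ε i = 1 ∨ ε i = -1) ∧ ∀ i, σ (b i) = ε i • b (π i) := by
  haveI := (Module.free_iff_isTorsionFree (R := ℤ) (M := M)).mp inferInstance
  haveI := @NoZeroSMulDivisors.mk ℤ M _ _ (‹Module ℤ M›).toDistribMulAction.toDistribSMul.toSMul
    (fun {c x} => (Module.isTorsionFree_iff_smul_eq_zero.mp this) c x)
  have htwo : ∀ x : ℤ, ∃ h r0, (r0 = 0 ∨ r0 = 1) ∧ x = 2 * h + r0 := by
    intro x
    rcases Int.even_or_odd x with ⟨y, hy⟩ | ⟨y, hy⟩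
    · exact ⟨y, 0, Or.inl rfl, by omega⟩
    · exact ⟨y, 1, Or.inr rfl, by omega⟩
  obtain ⟨n, b, π, ε, h1, h2⟩ := aux_thm htwo σ hσ
  exact ⟨n, b, π, ε, h1, fun i =>
    (h2 i).trans (Int.cast_smul_eq_zsmul ℤ (ε i) (b (π i)))⟩
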